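/- Let (X,F,μ) and (Y,G,ν) be probability spaces and H = ∪ₙ (Aₙ×Bₙ) with Aₙ∈F, Bₙ∈G. If μ(limsupₙ Aₙ) = 0 or ν(limsupₙ Bₙ) = 0, then α(1_H) = β(1_H), where α(1_H)=inf{P(H): P∈Γ(μ,ν)} and β(1_H)=sup{μ(f)+ν(g): f∈L¹(μ), g∈L¹(ν), f(x)+g(y) ≤ 1_H(x,y)}. -/

import Mathlib

open MeasureTheory Filter Topology

noncomputable section

variable {X Y : Type*}

/-- `P` is a coupling of `μ` and `ν`: a probability measure on the product
σ-field with marginals `μ` and `ν`. -/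
def IsCoupling [MeasurableSpace X] [MeasurableSpace Y]
    (μ : Measure X) (ν : Measure Y) (P : Measure (X × Y)) : Prop :=
  IsProbabilityMeasure P ∧ P.map Prod.fst = μ ∧ P.map Prod.snd = ν

/-- Values `∫ c dP` as `P` ranges over the couplings of `μ` and `ν`. -/
def primalSet [MeasurableSpace X] [MeasurableSpace Y]
    (μ : Measure X) (ν : Measure Y) (c : X × Y → ℝ) : Set ℝ :=
  {r | ∃ P : Measure (X × Y), IsCoupling μ ν P ∧ r = ∫ z, c z ∂P}

/-- `α(c) = inf_{P ∈ Γ(μ,ν)} ∫ c dP`. -/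
def alphaInf [MeasurableSpace X] [MeasurableSpace Y]
    (μ : Measure X) (ν : Measure Y) (c : X × Y → ℝ) : ℝ :=
  sInf (primalSet μ ν c)

/-- `α*(c) = sup_{P ∈ Γ(μ,ν)} ∫ c dP`. -/
def alphaSup [MeasurableSpace X] [MeasurableSpace Y]
    (μ : Measure X) (ν : Measure Y) (c : X × Y → ℝ) : ℝ :=
  sSup (primalSet μ ν c)

/-- Values `μ(f) + ν(g)` with `f ∈ L¹(μ)`, `g ∈ L¹(ν)` and `f + g ≤ c` pointwise. -/
def dualLowerSet [MeasurableSpace X] [MeasurableSpace Y]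
    (μ : Measure X) (ν : Measure Y) (c : X × Y → ℝ) : Set ℝ :=
  {r | ∃ (f : X → ℝ) (g : Y → ℝ), Integrable f μ ∧ Integrable g ν ∧
    (∀ x y, f x + g y ≤ c (x, y)) ∧ r = ∫ x, f x ∂μ + ∫ y, g y ∂ν}

/-- Values `μ(f) + ν(g)` with `f ∈ L¹(μ)`, `g ∈ L¹(ν)` and `f + g ≥ c` pointwise. -/
def dualUpperSet [MeasurableSpace X] [MeasurableSpace Y]
    (μ : Measure X) (ν : Measure Y) (c : X × Y → ℝ) : Set ℝ :=
  {r | ∃ (f : X → ℝ) (g : Y → ℝ), Integrable f μ ∧ Integrable g ν ∧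
    (∀ x y, c (x, y) ≤ f x + g y) ∧ r = ∫ x, f x ∂μ + ∫ y, g y ∂ν}

/-- `β(c) = sup {μ(f)+ν(g) : f + g ≤ c}`. -/
def betaSup [MeasurableSpace X] [MeasurableSpace Y]
    (μ : Measure X) (ν : Measure Y) (c : X × Y → ℝ) : ℝ :=
  sSup (dualLowerSet μ ν c)

/-- `β*(c) = inf {μ(f)+ν(g) : f + g ≥ c}`. -/
def betaInf [MeasurableSpace X] [MeasurableSpace Y]
    (μ : Measure X) (ν : Measure Y) (c : X × Y → ℝ) : ℝ :=
  sInf (dualUpperSet μ ν c)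

/-- Condition (1.1): `f₁ + g₁ ≤ c ≤ f₂ + g₂` with `f₁, f₂ ∈ L¹(μ)`, `g₁, g₂ ∈ L¹(ν)`. -/
def HasIntegrableBounds [MeasurableSpace X] [MeasurableSpace Y]
    (μ : Measure X) (ν : Measure Y) (c : X × Y → ℝ) : Prop :=
  ∃ (f₁ f₂ : X → ℝ) (g₁ g₂ : Y → ℝ), Integrable f₁ μ ∧ Integrable f₂ μ ∧
    Integrable g₁ ν ∧ Integrable g₂ ν ∧
    ∀ x y, f₁ x + g₁ y ≤ c (x, y) ∧ c (x, y) ≤ f₂ x + g₂ y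

/-- Real-valued indicator of a set. -/
def indR (H : Set (X × Y)) : X × Y → ℝ := H.indicator fun _ => (1 : ℝ)

/-- `R` is a finite union of measurable rectangles, i.e. an element of the ring
generated by the measurable rectangles. -/
def IsRectUnion [MeasurableSpace X] [MeasurableSpace Y] (R : Set (X × Y)) : Prop :=
  ∃ (n : ℕ) (A : Fin n → Set X) (B : Fin n → Set Y),
    (∀ i, MeasurableSet (A i)) ∧ (∀ i, MeasurableSet (B i)) ∧ R = ⋃ i, A i ×ˢ B i



section Discrete

variable {S T : Type*} [Fintype S] [Fintype T]

/-- Reachability by alternating augmenting paths. -/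
inductive ReachN {S T : Type*} [Fintype S] [Fintype T] (p : S → ℝ) (good : S → T → Prop)
    (w : S → T → ℝ) : ℕ → S → Prop
  | base (s : S) : (∑ t, w s t) < p s → ReachN p good w 0 s
  | step {k : ℕ} {s : S} (t : T) {s' : S} : ReachN p good w k s → good s t → 0 < w s' t →
      ReachN p good w (k + 1) s'

def IsFlow (p : S → ℝ) (q : T → ℝ) (good : S → T → Prop) (w : S → T → ℝ) : Prop :=
  (∀ s t, 0 ≤ w s t) ∧ (∀ s t, ¬ good s t → w s t = 0) ∧
    (∀ s, ∑ t, w s t ≤ p s) ∧ (∀ t, ∑ s, w s t ≤ q t)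

lemma ReachN.mono {p : S → ℝ} {good : S → T → Prop} {w w' : S → T → ℝ}
    (hrow : ∀ s, ∑ t, w' s t = ∑ t, w s t)
    (hpos : ∀ s t, 0 < w s t → 0 < w' s t) {k s} (h : ReachN p good w k s) :
    ReachN p good w' k s := by
  induction h with
  | base s h => exact .base s (by rw [hrow]; exact h)
  | step t h1 h2 h3 ih => exact .step t ih h2 (hpos _ _ h3)

lemma ReachN.zero_elim {p : S → ℝ} {good : S → T → Prop} {w : S → T → ℝ} {s : S}
    (h : ReachN p good w 0 s) : (∑ t, w s t) < p s := by
  cases h; assumption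

lemma ReachN.succ_elim {p : S → ℝ} {good : S → T → Prop} {w : S → T → ℝ} {k : ℕ} {s' : S}
    (h : ReachN p good w (k + 1) s') :
    ∃ s t₁, ReachN p good w k s ∧ good s t₁ ∧ 0 < w s' t₁ := by
  cases h with
  | step t h1 h2 h3 => exact ⟨_, t, h1, h2, h3⟩

lemma no_augmenting (p : S → ℝ) (q : T → ℝ) (good : S → T → Prop) (M : ℝ) (k : ℕ) :
    ∀ (w : S → T → ℝ), IsFlow p q good w → (∑ s, ∑ t, w s t) = M →
    (∀ w', IsFlow p q good w' → (∑ s, ∑ t, w' s t) ≤ M) →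
    ∀ s, ReachN p good w k s → ∀ t, good s t → (∑ s', w s' t) < q t → False := by
  classical
  induction k with
  | zero =>
    rintro w hw hM hopt s hreach t hgood hcol
    obtain ⟨hw0, hwsupp, hwrow, hwcol⟩ := hw
    have hrow : (∑ t', w s t') < p s := hreach.zero_elim
    set ε : ℝ := min (p s - ∑ t', w s t') (q t - ∑ s', w s' t) with hεdef
    have hε1 : ε ≤ p s - ∑ t', w s t' := min_le_left _ _
    have hε2 : ε ≤ q t - ∑ s', w s' t := min_le_right _ _
    have hε0 : 0 < ε := lt_min (by linarith) (by linarith)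
    set w' : S → T → ℝ := fun a b => w a b + if a = s then (if b = t then ε else 0) else 0
      with hw'
    have hrow' : ∀ a, ∑ b, w' a b = (∑ b, w a b) + (if a = s then ε else 0) := by
      intro a
      simp only [hw', Finset.sum_add_distrib]
      congr 1
      by_cases ha : a = s <;> simp [ha, Finset.sum_ite_eq']
    have hcol' : ∀ b, ∑ a, w' a b = (∑ a, w a b) + (if b = t then ε else 0) := by
      intro b
      simp only [hw', Finset.sum_add_distrib]
      congr 1
      rw [Finset.sum_ite_eq' Finset.univ s]
      simp
    have hw'flow : IsFlow p q good w' := by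
      refine ⟨fun a b => ?_, fun a b hab => ?_, fun a => ?_, fun b => ?_⟩
      · simp only [hw']
        have := hw0 a b
        split_ifs <;> linarith
      · simp only [hw']
        rw [hwsupp a b hab]
        split_ifs with h1 h2
        · exact absurd hgood (h1 ▸ h2 ▸ hab)
        · ring
        · ring
      · rw [hrow' a]
        split_ifs with h1
        · rw [h1]; linarith
        · simpa using hwrow a
      · rw [hcol' b]
        split_ifs with h1
        · rw [h1]; linarith
        · simpa using hwcol b
    have htot : ∑ a, ∑ b, w' a b = M + ε := by
      simp only [hrow', Finset.sum_add_distrib, hM]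
      rw [Finset.sum_ite_eq' Finset.univ s]
      simp
    have := hopt w' hw'flow
    rw [htot] at this
    linarith
  | succ k ih =>
    rintro w hw hM hopt s' hreach t hgood hcol
    obtain ⟨s, t₁, hreach₁, hgood₁, hpos₁⟩ := hreach.succ_elim
    obtain ⟨hw0, hwsupp, hwrow, hwcol⟩ := hw
    by_cases htt : t = t₁
    · subst htt
      exact ih w ⟨hw0, hwsupp, hwrow, hwcol⟩ hM hopt s hreach₁ t hgood₁ hcol
    -- push ε along edge (s', t₁) → (s', t)
    set ε : ℝ := min (w s' t₁ / 2) (q t - ∑ a, w a t) with hεdef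
    have hε1 : ε ≤ w s' t₁ / 2 := min_le_left _ _
    have hε2 : ε ≤ q t - ∑ a, w a t := min_le_right _ _
    have hε0 : 0 < ε := lt_min (by linarith) (by linarith)
    set w' : S → T → ℝ := fun a b =>
      w a b + (if a = s' then (if b = t then ε else 0) - (if b = t₁ then ε else 0) else 0)
      with hw'
    have hrow' : ∀ a, ∑ b, w' a b = ∑ b, w a b := by
      intro a
      simp only [hw', Finset.sum_add_distrib]
      by_cases ha : a = s' <;>
        simp [ha, Finset.sum_sub_distrib, Finset.sum_ite_eq']
    have hcol' : ∀ b, ∑ a, w' a b =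
        (∑ a, w a b) + ((if b = t then ε else 0) - (if b = t₁ then ε else 0)) := by
      intro b
      simp only [hw', Finset.sum_add_distrib]
      congr 1
      rw [Finset.sum_ite_eq' Finset.univ s']
      simp
    have hpos' : ∀ a b, 0 < w a b → 0 < w' a b := by
      intro a b hab
      simp only [hw']
      split_ifs with h1 h2 h3 h3
      · exact absurd (h2 ▸ h3 : t = t₁) htt
      · linarith
      · rw [h1, h3] at hab ⊢; linarith
      · linarith
      · linarith
    have hw'flow : IsFlow p q good w' := by
      refine ⟨fun a b => ?_, fun a b hab => ?_, fun a => ?_, fun b => ?_⟩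
      · have := hw0 a b
        have := hpos' a b
        simp only [hw'] at this ⊢
        split_ifs at this ⊢ with h1 h2 h3 h3
        · linarith
        · linarith
        · rw [h1, h3]
          rw [h1, h3] at this
          rcases eq_or_lt_of_le (hw0 s' t₁) with h | h
          · rw [← h] at hpos₁; exact absurd hpos₁ (by simp)
          · have := this h; linarith
        · linarith
        · linarith
      · simp only [hw']
        rw [hwsupp a b hab]
        have hb2 : ¬(a = s' ∧ b = t₁) := by
          rintro ⟨rfl, rfl⟩
          exact absurd (hwsupp _ _ hab) (by linarith)
        split_ifs with h1 h2 h3 h3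
        · exact absurd (h2 ▸ h3 : t = t₁) htt
        · exact absurd hgood (h1 ▸ h2 ▸ hab)
        · exact absurd ⟨h1, h3⟩ hb2
        · ring
        · ring
      · rw [hrow' a]; exact hwrow a
      · rw [hcol' b]
        have := hwcol b
        split_ifs with h1 h2 h2
        · exact absurd (h1 ▸ h2 : t = t₁) htt
        · rw [h1]; linarith
        · linarith
        · linarith
    have htot : ∑ a, ∑ b, w' a b = M := by
      simp only [hrow']; exact hM
    have hcol₁ : ∑ a, w' a t₁ < q t₁ := by
      rw [hcol' t₁]
      rw [if_neg (fun h => htt h.symm), if_pos rfl]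
      have := hwcol t₁
      linarith
    have hreach' : ReachN p good w' k s := hreach₁.mono hrow' hpos'
    exact ih w' hw'flow htot (fun w'' hw'' => hopt w'' hw'') s hreach' t₁ hgood₁ hcol₁

end Discrete

section Discrete2

variable {S T : Type*} [Fintype S] [Fintype T]

lemma exists_max_flow (p : S → ℝ) (q : T → ℝ) (good : S → T → Prop)
    (hp : ∀ s, 0 ≤ p s) (hq : ∀ t, 0 ≤ q t) :
    ∃ w, IsFlow p q good w ∧
      ∀ w', IsFlow p q good w' → (∑ s, ∑ t, w' s t) ≤ ∑ s, ∑ t, w s t := by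
  classical
  have hsub : {w : S → T → ℝ | IsFlow p q good w} ⊆
      Set.univ.pi fun s => Set.univ.pi fun _t => Set.Icc 0 (p s) := by
    rintro w ⟨h0, _, hrow, _⟩ s _ t _
    refine ⟨h0 s t, ?_⟩
    calc w s t ≤ ∑ t', w s t' :=
          Finset.single_le_sum (fun t' _ => h0 s t') (Finset.mem_univ t)
      _ ≤ p s := hrow s
  have hclosed : IsClosed {w : S → T → ℝ | IsFlow p q good w} := by
    have h1 : IsClosed (⋂ (s : S) (t : T), {w : S → T → ℝ | 0 ≤ w s t}) := by
      refine isClosed_iInter fun s => isClosed_iInter fun t => ?_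
      exact isClosed_le continuous_const ((continuous_apply t).comp (continuous_apply s))
    have h2 : IsClosed (⋂ (s : S) (t : T), {w : S → T → ℝ | ¬ good s t → w s t = 0}) := by
      refine isClosed_iInter fun s => isClosed_iInter fun t => ?_
      by_cases h : good s t
      · have : {w : S → T → ℝ | ¬ good s t → w s t = 0} = Set.univ := by
          ext w; simp [h]
        rw [this]; exact isClosed_univ
      · have : {w : S → T → ℝ | ¬ good s t → w s t = 0} = {w : S → T → ℝ | w s t = 0} := by
          ext w; simp [h]
        rw [this]
        exact isClosed_eq ((continuous_apply t).comp (continuous_apply s)) continuous_const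
    have h3 : IsClosed (⋂ (s : S), {w : S → T → ℝ | ∑ t, w s t ≤ p s}) := by
      refine isClosed_iInter fun s => ?_
      exact isClosed_le (by continuity) continuous_const
    have h4 : IsClosed (⋂ (t : T), {w : S → T → ℝ | ∑ s, w s t ≤ q t}) := by
      refine isClosed_iInter fun t => ?_
      exact isClosed_le (by continuity) continuous_const
    have : {w : S → T → ℝ | IsFlow p q good w} =
        (⋂ (s : S) (t : T), {w : S → T → ℝ | 0 ≤ w s t}) ∩
        ((⋂ (s : S) (t : T), {w : S → T → ℝ | ¬ good s t → w s t = 0}) ∩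
        ((⋂ (s : S), {w : S → T → ℝ | ∑ t, w s t ≤ p s}) ∩
         (⋂ (t : T), {w : S → T → ℝ | ∑ s, w s t ≤ q t}))) := by
      ext w
      simp only [Set.mem_setOf_eq, Set.mem_inter_iff, Set.mem_iInter, IsFlow]
    rw [this]
    exact h1.inter (h2.inter (h3.inter h4))
  have hcpt : IsCompact {w : S → T → ℝ | IsFlow p q good w} :=
    (isCompact_univ_pi fun s => isCompact_univ_pi fun _t => isCompact_Icc).of_isClosed_subset
      hclosed hsub
  have hne : {w : S → T → ℝ | IsFlow p q good w}.Nonempty :=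
    ⟨0, fun _ _ => le_refl 0, fun _ _ _ => rfl, fun s => by simpa using hp s,
      fun t => by simpa using hq t⟩
  obtain ⟨w, hwmem, hwmax⟩ := hcpt.exists_isMaxOn hne
    (Continuous.continuousOn (by continuity : Continuous fun w : S → T → ℝ => ∑ s, ∑ t, w s t))
  exact ⟨w, hwmem, fun w' hw' => hwmax hw'⟩

lemma maxflow_ge_cut (p : S → ℝ) (q : T → ℝ) (good : S → T → Prop)
    [∀ s t, Decidable (good s t)]
    (d : ℝ)
    (hd : ∀ U : Finset S, (∑ s ∈ U, p s) -
      ∑ t ∈ Finset.univ.filter (fun t => ∃ s ∈ U, good s t), q t ≤ d)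
    (w : S → T → ℝ) (hw : IsFlow p q good w)
    (hopt : ∀ w', IsFlow p q good w' → (∑ s, ∑ t, w' s t) ≤ ∑ s, ∑ t, w s t) :
    (∑ s, p s) - d ≤ ∑ s, ∑ t, w s t := by
  classical
  obtain ⟨hw0, hwsupp, hwrow, hwcol⟩ := hw
  set U : Finset S := Finset.univ.filter (fun s => ∃ k, ReachN p good w k s) with hU
  set N : Finset T := Finset.univ.filter (fun t => ∃ s ∈ U, good s t) with hN
  have memU : ∀ s, s ∈ U ↔ ∃ k, ReachN p good w k s := by
    intro s; rw [hU, Finset.mem_filter]; simp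
  have memN : ∀ t, t ∈ N ↔ ∃ s ∈ U, good s t := by
    intro t; rw [hN, Finset.mem_filter]; simp
  have fact1 : ∀ s, s ∉ U → ∑ t, w s t = p s := by
    intro s hs
    refine le_antisymm (hwrow s) (not_lt.1 fun hlt => ?_)
    exact hs ((memU s).2 ⟨0, .base s hlt⟩)
  have fact2 : ∀ t ∈ N, ∑ s, w s t = q t := by
    intro t ht
    refine le_antisymm (hwcol t) (not_lt.1 fun hlt => ?_)
    obtain ⟨s, hsU, hgood⟩ := (memN t).1 ht
    obtain ⟨k, hk⟩ := (memU s).1 hsU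
    exact no_augmenting p q good (∑ s, ∑ t, w s t) k w ⟨hw0, hwsupp, hwrow, hwcol⟩ rfl hopt
      s hk t hgood hlt
  have fact3 : ∀ t ∈ N, ∀ s, s ∉ U → w s t = 0 := by
    intro t ht s hs
    obtain ⟨s₁, hs₁U, hgood₁⟩ := (memN t).1 ht
    obtain ⟨k, hk⟩ := (memU s₁).1 hs₁U
    refine le_antisymm (not_lt.1 fun hlt => ?_) (hw0 s t)
    exact hs ((memU s).2 ⟨k + 1, .step t hk hgood₁ hlt⟩)
  have hsplit : ∑ s, ∑ t, w s t = (∑ s ∈ U, ∑ t, w s t) + ∑ s ∈ Uᶜ, ∑ t, w s t :=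
    (Finset.sum_add_sum_compl U _).symm
  have h2 : ∑ s ∈ Uᶜ, ∑ t, w s t = ∑ s ∈ Uᶜ, p s := by
    refine Finset.sum_congr rfl fun s hs => ?_
    exact fact1 s (Finset.mem_compl.1 hs)
  have h3 : ∑ t ∈ N, q t ≤ ∑ s ∈ U, ∑ t, w s t := by
    have e1 : ∀ t ∈ N, q t = ∑ s ∈ U, w s t := by
      intro t ht
      rw [← fact2 t ht]
      exact (Finset.sum_subset (Finset.subset_univ U)
        (fun s _ hs => fact3 t ht s hs)).symm
    calc ∑ t ∈ N, q t = ∑ t ∈ N, ∑ s ∈ U, w s t := Finset.sum_congr rfl e1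
      _ = ∑ s ∈ U, ∑ t ∈ N, w s t := Finset.sum_comm
      _ ≤ ∑ s ∈ U, ∑ t, w s t := Finset.sum_le_sum fun s _ =>
          Finset.sum_le_sum_of_subset_of_nonneg (Finset.subset_univ N)
            (fun t _ _ => hw0 s t)
  have h4 : (∑ s ∈ U, p s) - ∑ t ∈ N, q t ≤ d := hd U
  have h5 : ∑ s, p s = (∑ s ∈ U, p s) + ∑ s ∈ Uᶜ, p s :=
    (Finset.sum_add_sum_compl U _).symm
  linarith [hsplit, h2, h3, h4, h5]

end Discrete2

section Discrete3

variable {S T : Type*} [Fintype S] [Fintype T]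

theorem discrete_transport (p : S → ℝ) (q : T → ℝ) (good : S → T → Prop)
    [∀ s t, Decidable (good s t)]
    (hp : ∀ s, 0 ≤ p s) (hq : ∀ t, 0 ≤ q t) (hpq : ∑ s, p s = ∑ t, q t)
    (d : ℝ) (hd0 : 0 ≤ d)
    (hd : ∀ U : Finset S, (∑ s ∈ U, p s) -
      ∑ t ∈ Finset.univ.filter (fun t => ∃ s ∈ U, good s t), q t ≤ d) :
    ∃ w : S → T → ℝ, (∀ s t, 0 ≤ w s t) ∧ (∀ s, ∑ t, w s t = p s) ∧
      (∀ t, ∑ s, w s t = q t) ∧ (∑ s, ∑ t, if good s t then 0 else w s t) ≤ d := by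
  classical
  obtain ⟨w, hw, hopt⟩ := exists_max_flow p q good hp hq
  have hcut : (∑ s, p s) - d ≤ ∑ s, ∑ t, w s t := maxflow_ge_cut p q good d hd w hw hopt
  obtain ⟨hw0, hwsupp, hwrow, hwcol⟩ := hw
  set m : ℝ := ∑ s, ∑ t, w s t with hm
  set D : ℝ := (∑ s, p s) - m with hD
  have hDr : ∑ s, (p s - ∑ t, w s t) = D := by
    rw [hD, hm, Finset.sum_sub_distrib]
  have hcolsum : ∑ t, ∑ s, w s t = m := Finset.sum_comm
  have hDc : ∑ t, (q t - ∑ s, w s t) = D := by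
    rw [hD, hm, Finset.sum_sub_distrib, ← hpq, hcolsum, hm]
  have hDle : D ≤ d := by rw [hD]; linarith
  have hD0 : 0 ≤ D := by
    rw [← hDr]
    exact Finset.sum_nonneg fun s _ => by linarith [hwrow s]
  rcases eq_or_lt_of_le hD0 with hD0' | hD0'
  · -- D = 0 : w already has exact marginals
    have hrows : ∀ s, ∑ t, w s t = p s := by
      have := (Finset.sum_eq_zero_iff_of_nonneg
        (fun s (_ : s ∈ Finset.univ) => by linarith [hwrow s] :
          ∀ s ∈ Finset.univ, 0 ≤ p s - ∑ t, w s t)).1 (by rw [hDr, ← hD0'])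
      intro s
      have := this s (Finset.mem_univ s)
      linarith
    have hcols : ∀ t, ∑ s, w s t = q t := by
      have := (Finset.sum_eq_zero_iff_of_nonneg
        (fun t (_ : t ∈ Finset.univ) => by linarith [hwcol t] :
          ∀ t ∈ Finset.univ, 0 ≤ q t - ∑ s, w s t)).1 (by rw [hDc, ← hD0'])
      intro t
      have := this t (Finset.mem_univ t)
      linarith
    refine ⟨w, hw0, hrows, hcols, ?_⟩
    have : ∑ s, ∑ t, (if good s t then 0 else w s t) = 0 := by
      refine Finset.sum_eq_zero fun s _ => Finset.sum_eq_zero fun t _ => ?_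
      split_ifs with h
      · rfl
      · exact hwsupp s t h
    rw [this]; exact hd0
  · -- D > 0 : top up with product of deficiencies
    set w' : S → T → ℝ :=
      fun s t => w s t + (p s - ∑ t', w s t') * (q t - ∑ s', w s' t) / D with hw'
    have hr0 : ∀ s, 0 ≤ p s - ∑ t', w s t' := fun s => by linarith [hwrow s]
    have hc0 : ∀ t, 0 ≤ q t - ∑ s', w s' t := fun t => by linarith [hwcol t]
    have hw'0 : ∀ s t, 0 ≤ w' s t := by
      intro s t
      have := hw0 s t
      have := hr0 s
      have := hc0 t
      have : 0 ≤ (p s - ∑ t', w s t') * (q t - ∑ s', w s' t) / D := by positivity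
      simp only [hw']
      linarith [hw0 s t]
    have hrows : ∀ s, ∑ t, w' s t = p s := by
      intro s
      simp only [hw', Finset.sum_add_distrib]
      have : ∑ t, (p s - ∑ t', w s t') * (q t - ∑ s', w s' t) / D
          = (p s - ∑ t', w s t') * (∑ t, (q t - ∑ s', w s' t)) / D := by
        rw [← Finset.sum_div, ← Finset.mul_sum]
      rw [this, hDc]
      field_simp
      ring
    have hcols : ∀ t, ∑ s, w' s t = q t := by
      intro t
      simp only [hw', Finset.sum_add_distrib]
      have : ∑ s, (p s - ∑ t', w s t') * (q t - ∑ s', w s' t) / D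
          = (∑ s, (p s - ∑ t', w s t')) * (q t - ∑ s', w s' t) / D := by
        rw [← Finset.sum_div, ← Finset.sum_mul]
      rw [this, hDr]
      field_simp
      ring
    refine ⟨w', hw'0, hrows, hcols, ?_⟩
    have hb : ∀ s t, (if good s t then 0 else w' s t)
        ≤ (p s - ∑ t', w s t') * (q t - ∑ s', w s' t) / D := by
      intro s t
      split_ifs with h
      · have := hr0 s; have := hc0 t; positivity
      · simp only [hw', hwsupp s t h, zero_add]; exact le_refl _
    calc ∑ s, ∑ t, (if good s t then 0 else w' s t)
        ≤ ∑ s, ∑ t, (p s - ∑ t', w s t') * (q t - ∑ s', w s' t) / D :=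
          Finset.sum_le_sum fun s _ => Finset.sum_le_sum fun t _ => hb s t
      _ = (∑ s, (p s - ∑ t', w s t')) * (∑ t, (q t - ∑ s', w s' t)) / D := by
          rw [Finset.sum_mul, Finset.sum_div]
          refine Finset.sum_congr rfl fun s _ => ?_
          rw [← Finset.sum_div, ← Finset.mul_sum]
      _ = D * D / D := by rw [hDr, hDc]
      _ = D := by field_simp
      _ ≤ d := hDle
end Discrete3

-- ==================== atoms ====================

section Atoms

variable {ι : Type*} [Fintype ι] [DecidableEq ι]

def atomOf (A : ι → Set X) (s : Finset ι) : Set X := {x | ∀ i, x ∈ A i ↔ i ∈ s}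

lemma measurable_atomOf [MeasurableSpace X] {A : ι → Set X} (hA : ∀ i, MeasurableSet (A i))
    (s : Finset ι) : MeasurableSet (atomOf A s) := by
  classical
  have : atomOf A s = ⋂ i, (if i ∈ s then A i else (A i)ᶜ) := by
    ext x
    simp only [atomOf, Set.mem_setOf_eq, Set.mem_iInter]
    constructor
    · intro h i
      by_cases hi : i ∈ s
      · simpa [hi] using (h i).2 hi
      · simp only [hi, if_false, Set.mem_compl_iff]
        exact fun hx => hi ((h i).1 hx)
    · intro h i
      constructor
      · intro hx
        by_contra hi
        have := h i
        simp only [hi, if_false, Set.mem_compl_iff] at this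
        exact this hx
      · intro hi
        have := h i
        simpa [hi] using this
  rw [this]
  exact MeasurableSet.iInter fun i => by
    by_cases hi : i ∈ s <;> simp [hi, hA i, (hA i).compl]

lemma atomOf_disjoint {A : ι → Set X} {s s' : Finset ι} (h : s ≠ s') :
    Disjoint (atomOf A s) (atomOf A s') := by
  rw [Set.disjoint_left]
  intro x hx hx'
  exact h (Finset.ext fun i => (hx i).symm.trans (hx' i))

lemma mem_atomOf_self (A : ι → Set X) [∀ i (x : X), Decidable (x ∈ A i)] (x : X) :
    x ∈ atomOf A (Finset.univ.filter (fun i => x ∈ A i)) := by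
  intro i
  simp

lemma sum_measure_inter_atomOf [MeasurableSpace X] {A : ι → Set X}
    (hA : ∀ i, MeasurableSet (A i)) (μ : Measure X) {E : Set X} (hE : MeasurableSet E) :
    ∑ s : Finset ι, μ (E ∩ atomOf A s) = μ E := by
  classical
  have hcover : E = ⋃ s ∈ (Finset.univ : Finset (Finset ι)), E ∩ atomOf A s := by
    ext x
    simp only [Set.mem_iUnion, Finset.mem_univ, exists_prop, true_and, Set.mem_inter_iff]
    constructor
    · intro hx
      exact ⟨Finset.univ.filter (fun i => x ∈ A i), hx, mem_atomOf_self A x⟩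
    · rintro ⟨s, hx, _⟩; exact hx
  conv_rhs => rw [hcover]
  rw [measure_biUnion_finset]
  · intro s _ s' _ hss'
    exact (atomOf_disjoint hss').mono Set.inter_subset_right Set.inter_subset_right
  · exact fun s _ => hE.inter (measurable_atomOf hA s)

end Atoms

-- ==================== weak duality ====================

section WeakDuality

variable [MeasurableSpace X] [MeasurableSpace Y]
  (μ : Measure X) (ν : Measure Y) [IsProbabilityMeasure μ] [IsProbabilityMeasure ν]

lemma weak_duality {H : Set (X × Y)} (hH : MeasurableSet H) :
    ∀ r ∈ dualLowerSet μ ν (indR H), ∀ r' ∈ primalSet μ ν (indR H), r ≤ r' := by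
  rintro r ⟨f, g, hf, hg, hle, rfl⟩ r' ⟨P, ⟨hPprob, hPfst, hPsnd⟩, rfl⟩
  haveI := hPprob
  have hf' : Integrable f (P.map Prod.fst) := hPfst ▸ hf
  have hg' : Integrable g (P.map Prod.snd) := hPsnd ▸ hg
  have h1 : Integrable (fun z : X × Y => f z.1) P := by
    have := (integrable_map_measure hf'.aestronglyMeasurable
      measurable_fst.aemeasurable).1 hf'
    exact this
  have h2 : Integrable (fun z : X × Y => g z.2) P := by
    have := (integrable_map_measure hg'.aestronglyMeasurable
      measurable_snd.aemeasurable).1 hg'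
    exact this
  have e1 : ∫ x, f x ∂μ = ∫ z, f z.1 ∂P := by
    rw [← hPfst, integral_map measurable_fst.aemeasurable hf'.aestronglyMeasurable]
  have e2 : ∫ y, g y ∂ν = ∫ z, g z.2 ∂P := by
    rw [← hPsnd, integral_map measurable_snd.aemeasurable hg'.aestronglyMeasurable]
  have hInt : Integrable (indR H) P := by
    unfold indR
    exact (integrable_const (1 : ℝ)).indicator hH
  rw [e1, e2, ← integral_add h1 h2]
  exact integral_mono (h1.add h2) hInt (fun z => hle z.1 z.2)

lemma prod_mem_primal {H : Set (X × Y)} :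
    (∫ z, indR H z ∂(μ.prod ν)) ∈ primalSet μ ν (indR H) := by
  refine ⟨μ.prod ν, ⟨inferInstance, ?_, ?_⟩, rfl⟩
  · rw [Measure.map_fst_prod]; simp
  · rw [Measure.map_snd_prod]; simp

lemma zero_mem_dual {H : Set (X × Y)} : (0 : ℝ) ∈ dualLowerSet μ ν (indR H) := by
  refine ⟨fun _ => 0, fun _ => 0, integrable_const 0, integrable_const 0, ?_, by simp⟩
  intro x y
  simp only [add_zero]
  exact Set.indicator_nonneg (fun _ _ => zero_le_one) _

lemma dual_bddAbove {H : Set (X × Y)} (hH : MeasurableSet H) :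
    BddAbove (dualLowerSet μ ν (indR H)) :=
  ⟨∫ z, indR H z ∂(μ.prod ν), fun r hr => weak_duality μ ν hH r hr _ (prod_mem_primal μ ν)⟩

lemma primal_bddBelow {H : Set (X × Y)} :
    BddBelow (primalSet μ ν (indR H)) := by
  refine ⟨0, fun r hr => ?_⟩
  obtain ⟨P, _, rfl⟩ := hr
  exact integral_nonneg (Set.indicator_nonneg (fun _ _ => zero_le_one))

end WeakDuality

-- construction part, to be appended after m.lean content and discrete part
section Construction

open scoped ENNReal

variable [MeasurableSpace X] [MeasurableSpace Y]
  (μ : Measure X) (ν : Measure Y) [IsProbabilityMeasure μ] [IsProbabilityMeasure ν]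

lemma finite_union_lemma {n : ℕ} (A : Fin n → Set X) (B : Fin n → Set Y)
    (hA : ∀ i, MeasurableSet (A i)) (hB : ∀ i, MeasurableSet (B i)) :
    ∃ (P : Measure (X × Y)) (r : ℝ), IsCoupling μ ν P ∧
      r ∈ dualLowerSet μ ν (indR (⋃ i, A i ×ˢ B i)) ∧
      (P (⋃ i, A i ×ˢ B i)).toReal ≤ r := by
  classical
  set H : Set (X × Y) := ⋃ i, A i ×ˢ B i with hHdef
  have hH : MeasurableSet H := MeasurableSet.iUnion fun i => (hA i).prod (hB i)
  set p : Finset (Fin n) → ℝ := fun s => (μ (atomOf A s)).toReal with hpdef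
  set q : Finset (Fin n) → ℝ := fun t => (ν (atomOf B t)).toReal with hqdef
  set good : Finset (Fin n) → Finset (Fin n) → Prop := fun s t => s ∩ t = ∅ with hgooddef
  have hrect : ∀ s t (x : X) (y : Y), x ∈ atomOf A s → y ∈ atomOf B t →
      ((x, y) ∈ H ↔ ¬ good s t) := by
    intro s t x y hx hy
    simp only [hHdef, Set.mem_iUnion, Set.mem_prod, hgooddef]
    constructor
    · rintro ⟨i, hxi, hyi⟩ hst
      have : i ∈ s ∩ t := Finset.mem_inter.2 ⟨(hx i).1 hxi, (hy i).1 hyi⟩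
      simp [hst] at this
    · intro hst
      obtain ⟨i, hi⟩ := Finset.nonempty_iff_ne_empty.2 hst
      rw [Finset.mem_inter] at hi
      exact ⟨i, (hx i).2 hi.1, (hy i).2 hi.2⟩
  have hp : ∀ s, 0 ≤ p s := fun s => ENNReal.toReal_nonneg
  have hq : ∀ t, 0 ≤ q t := fun t => ENNReal.toReal_nonneg
  have hpsum : ∑ s, p s = 1 := by
    have h := sum_measure_inter_atomOf hA μ MeasurableSet.univ
    simp only [Set.univ_inter] at h
    have : ∑ s, p s = ((∑ s, μ (atomOf A s))).toReal := by
      rw [ENNReal.toReal_sum (fun s _ => measure_ne_top μ _)]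
    rw [this, h, measure_univ, ENNReal.toReal_one]
  have hqsum : ∑ t, q t = 1 := by
    have h := sum_measure_inter_atomOf hB ν MeasurableSet.univ
    simp only [Set.univ_inter] at h
    have : ∑ t, q t = ((∑ t, ν (atomOf B t))).toReal := by
      rw [ENNReal.toReal_sum (fun t _ => measure_ne_top ν _)]
    rw [this, h, measure_univ, ENNReal.toReal_one]
  -- the dual value
  set cutf : Finset (Finset (Fin n)) → ℝ := fun U => (∑ s ∈ U, p s) -
    ∑ t ∈ Finset.univ.filter (fun t => ∃ s ∈ U, good s t), q t with hcutf
  have hune : (Finset.univ : Finset (Finset (Finset (Fin n)))).Nonempty :=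
    Finset.univ_nonempty
  set d : ℝ := Finset.univ.sup' hune cutf with hddef
  have hd : ∀ U, cutf U ≤ d := fun U => Finset.le_sup' cutf (Finset.mem_univ U)
  have hcut0 : cutf ∅ = 0 := by
    simp [hcutf]
  have hd0 : 0 ≤ d := hcut0 ▸ hd ∅
  -- d is attained by a dual pair
  obtain ⟨U₀, _, hU₀⟩ := Finset.exists_mem_eq_sup' hune cutf
  set C : Set X := ⋃ s ∈ U₀, atomOf A s with hCdef
  set NU : Finset (Finset (Fin n)) :=
    Finset.univ.filter (fun t => ∃ s ∈ U₀, good s t) with hNUdef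
  set D : Set Y := ⋃ t ∈ NU, atomOf B t with hDdef
  have hC : MeasurableSet C := MeasurableSet.biUnion U₀.countable_toSet
    (fun s _ => measurable_atomOf hA s)
  have hD : MeasurableSet D := MeasurableSet.biUnion NU.countable_toSet
    (fun t _ => measurable_atomOf hB t)
  have hmuC : (μ C).toReal = ∑ s ∈ U₀, p s := by
    rw [hCdef, measure_biUnion_finset
      (fun s _ s' _ hss' => atomOf_disjoint hss') (fun s _ => measurable_atomOf hA s)]
    rw [ENNReal.toReal_sum (fun s _ => measure_ne_top μ _)]
  have hnuD : (ν D).toReal = ∑ t ∈ NU, q t := by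
    rw [hDdef, measure_biUnion_finset
      (fun t _ t' _ htt' => atomOf_disjoint htt') (fun t _ => measurable_atomOf hB t)]
    rw [ENNReal.toReal_sum (fun t _ => measure_ne_top ν _)]
  have hdual : d ∈ dualLowerSet μ ν (indR H) := by
    refine ⟨C.indicator (fun _ => 1), fun y => - D.indicator (fun _ => 1) y,
      (integrable_const (1 : ℝ)).indicator hC,
      ((integrable_const (1 : ℝ)).indicator hD).neg, ?_, ?_⟩
    · intro x y
      by_cases hxC : x ∈ C
      · by_cases hyD : y ∈ D
        · simp only [Set.indicator_of_mem hxC, Set.indicator_of_mem hyD]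
          simp only [add_neg_cancel]
          exact Set.indicator_nonneg (fun _ _ => zero_le_one) _
        · -- x ∈ C, y ∉ D : must be in H
          simp only [Set.indicator_of_mem hxC, Set.indicator_of_notMem hyD, neg_zero, add_zero]
          obtain ⟨s, hsU₀, hxs⟩ : ∃ s ∈ U₀, x ∈ atomOf A s := by
            simpa only [hCdef, Set.mem_iUnion, exists_prop] using hxC
          have hyt : y ∈ atomOf B (Finset.univ.filter (fun i => y ∈ B i)) :=
            mem_atomOf_self B y
          set t : Finset (Fin n) := Finset.univ.filter (fun i => y ∈ B i)
          have htN : t ∉ NU := by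
            intro ht
            exact hyD (by
              rw [hDdef]
              exact Set.mem_biUnion ht hyt)
          have hng : ¬ good s t := by
            intro hg
            exact htN (by
              rw [hNUdef, Finset.mem_filter]
              exact ⟨Finset.mem_univ t, s, hsU₀, hg⟩)
          have : (x, y) ∈ H := (hrect s t x y hxs hyt).2 hng
          rw [indR, Set.indicator_of_mem this]
      · by_cases hyD : y ∈ D
        · simp only [Set.indicator_of_notMem hxC, Set.indicator_of_mem hyD, zero_add]
          have : (0:ℝ) ≤ indR H (x, y) := Set.indicator_nonneg (fun _ _ => zero_le_one) _
          linarith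
        · simp only [Set.indicator_of_notMem hxC, Set.indicator_of_notMem hyD, neg_zero,
            add_zero]
          exact Set.indicator_nonneg (fun _ _ => zero_le_one) _
    · rw [integral_indicator_const (1 : ℝ) hC, integral_neg,
        integral_indicator_const (1 : ℝ) hD]
      simp only [smul_eq_mul, mul_one, measureReal_def]
      rw [hddef, hU₀, hmuC, hnuD, hcutf, hNUdef]
      ring
  -- discrete coupling
  obtain ⟨w, hw0, hwrow, hwcol, hwbad⟩ := discrete_transport p q good hp hq
    (by rw [hpsum, hqsum]) d hd0 (fun U => hd U)
  -- vanishing coefficients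
  have hmu0 : ∀ s t, μ (atomOf A s) = 0 → w s t = 0 := by
    intro s t hmu
    have h1 : w s t ≤ ∑ t', w s t' :=
      Finset.single_le_sum (fun t' _ => hw0 s t') (Finset.mem_univ t)
    have h2 : p s = 0 := by rw [hpdef]; simp [hmu]
    have := hwrow s
    have := hw0 s t
    linarith [h1, h2.symm ▸ this]
  have hν0 : ∀ s t, ν (atomOf B t) = 0 → w s t = 0 := by
    intro s t hν
    have h1 : w s t ≤ ∑ s', w s' t :=
      Finset.single_le_sum (fun s' _ => hw0 s' t) (Finset.mem_univ s)
    have h2 : q t = 0 := by rw [hqdef]; simp [hν]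
    have := hwcol t
    have := hw0 s t
    linarith [h1, h2.symm ▸ this]
  -- the coupling measure
  set κ : Finset (Fin n) → Finset (Fin n) → ℝ≥0∞ := fun s t =>
    ENNReal.ofReal (w s t) * (μ (atomOf A s))⁻¹ * (ν (atomOf B t))⁻¹ with hκdef
  set P : Measure (X × Y) := ∑ s : Finset (Fin n), ∑ t : Finset (Fin n),
    κ s t • ((μ.restrict (atomOf A s)).prod (ν.restrict (atomOf B t))) with hPdef
  have hPapp : ∀ (E : Set (X × Y)), MeasurableSet E →
      P E = ∑ s : Finset (Fin n), ∑ t : Finset (Fin n),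
        κ s t * (μ.prod ν) (E ∩ (atomOf A s ×ˢ atomOf B t)) := by
    intro E hE
    rw [hPdef, Measure.finset_sum_apply]
    refine Finset.sum_congr rfl fun s _ => ?_
    rw [Measure.finset_sum_apply]
    refine Finset.sum_congr rfl fun t _ => ?_
    rw [Measure.smul_apply, Measure.prod_restrict, Measure.restrict_apply hE, smul_eq_mul]
  -- scalar cancellation
  have hκcancel : ∀ s t (a : ℝ≥0∞), a ≤ μ (atomOf A s) →
      κ s t * (a * ν (atomOf B t)) = ENNReal.ofReal (w s t) * (μ (atomOf A s))⁻¹ * a := by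
    intro s t a ha
    by_cases hν : ν (atomOf B t) = 0
    · rw [hν, mul_zero, mul_zero, hν0 s t hν]
      simp
    · rw [hκdef]
      have hνne : ν (atomOf B t) ≠ ⊤ := measure_ne_top ν _
      calc ENNReal.ofReal (w s t) * (μ (atomOf A s))⁻¹ * (ν (atomOf B t))⁻¹ *
            (a * ν (atomOf B t))
          = ENNReal.ofReal (w s t) * (μ (atomOf A s))⁻¹ * a *
            ((ν (atomOf B t))⁻¹ * ν (atomOf B t)) := by ring
        _ = ENNReal.ofReal (w s t) * (μ (atomOf A s))⁻¹ * a := by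
            rw [ENNReal.inv_mul_cancel hν hνne, mul_one]
  have hfinal : ∀ s (a : ℝ≥0∞), a ≤ μ (atomOf A s) →
      ENNReal.ofReal (p s) * (μ (atomOf A s))⁻¹ * a = a := by
    intro s a ha
    rw [hpdef]
    rw [ENNReal.ofReal_toReal (measure_ne_top μ _)]
    by_cases hmu : μ (atomOf A s) = 0
    · have : a = 0 := le_antisymm (hmu ▸ ha) (zero_le)
      simp [this]
    · rw [ENNReal.mul_inv_cancel hmu (measure_ne_top μ _), one_mul]
  have hκcancel2 : ∀ s t (b : ℝ≥0∞), b ≤ ν (atomOf B t) →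
      κ s t * (μ (atomOf A s) * b) = ENNReal.ofReal (w s t) * (ν (atomOf B t))⁻¹ * b := by
    intro s t b hb
    by_cases hmu : μ (atomOf A s) = 0
    · rw [hmu, zero_mul, mul_zero, hmu0 s t hmu]
      simp
    · rw [hκdef]
      have hmune : μ (atomOf A s) ≠ ⊤ := measure_ne_top μ _
      calc ENNReal.ofReal (w s t) * (μ (atomOf A s))⁻¹ * (ν (atomOf B t))⁻¹ *
            (μ (atomOf A s) * b)
          = ENNReal.ofReal (w s t) * (ν (atomOf B t))⁻¹ * b *
            ((μ (atomOf A s))⁻¹ * μ (atomOf A s)) := by ring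
        _ = ENNReal.ofReal (w s t) * (ν (atomOf B t))⁻¹ * b := by
            rw [ENNReal.inv_mul_cancel hmu hmune, mul_one]
  have hfinal2 : ∀ t (b : ℝ≥0∞), b ≤ ν (atomOf B t) →
      ENNReal.ofReal (q t) * (ν (atomOf B t))⁻¹ * b = b := by
    intro t b hb
    rw [hqdef]
    rw [ENNReal.ofReal_toReal (measure_ne_top ν _)]
    by_cases hν : ν (atomOf B t) = 0
    · have : b = 0 := le_antisymm (hν ▸ hb) (zero_le)
      simp [this]
    · rw [ENNReal.mul_inv_cancel hν (measure_ne_top ν _), one_mul]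
  have hAcancel : ∀ s t, ENNReal.ofReal (w s t) * (μ (atomOf A s))⁻¹ * μ (atomOf A s)
      = ENNReal.ofReal (w s t) := by
    intro s t
    by_cases hmu : μ (atomOf A s) = 0
    · rw [hmu0 s t hmu]; simp
    · rw [mul_assoc, ENNReal.inv_mul_cancel hmu (measure_ne_top μ _), mul_one]
  -- first marginal
  have hmarg1 : P.map Prod.fst = μ := by
    refine Measure.ext fun E hE => ?_
    rw [Measure.map_apply measurable_fst hE, ← Set.prod_univ,
      hPapp _ (hE.prod MeasurableSet.univ)]
    have hterm : ∀ s t, κ s t * (μ.prod ν) ((E ×ˢ Set.univ) ∩ (atomOf A s ×ˢ atomOf B t))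
        = ENNReal.ofReal (w s t) * (μ (atomOf A s))⁻¹ * μ (E ∩ atomOf A s) := by
      intro s t
      rw [Set.prod_inter_prod, Set.univ_inter, Measure.prod_prod]
      exact hκcancel s t _ (measure_mono Set.inter_subset_right)
    calc ∑ s : Finset (Fin n), ∑ t : Finset (Fin n),
          κ s t * (μ.prod ν) ((E ×ˢ Set.univ) ∩ (atomOf A s ×ˢ atomOf B t))
        = ∑ s : Finset (Fin n), ∑ t : Finset (Fin n),
            ENNReal.ofReal (w s t) * (μ (atomOf A s))⁻¹ * μ (E ∩ atomOf A s) :=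
          Finset.sum_congr rfl fun s _ => Finset.sum_congr rfl fun t _ => hterm s t
      _ = ∑ s : Finset (Fin n),
            ENNReal.ofReal (p s) * (μ (atomOf A s))⁻¹ * μ (E ∩ atomOf A s) := by
          refine Finset.sum_congr rfl fun s _ => ?_
          rw [← Finset.sum_mul, ← Finset.sum_mul,
            ← ENNReal.ofReal_sum_of_nonneg (fun t _ => hw0 s t), hwrow s]
      _ = ∑ s : Finset (Fin n), μ (E ∩ atomOf A s) :=
          Finset.sum_congr rfl fun s _ => hfinal s _ (measure_mono Set.inter_subset_right)
      _ = μ E := sum_measure_inter_atomOf hA μ hE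
  -- second marginal
  have hmarg2 : P.map Prod.snd = ν := by
    refine Measure.ext fun E hE => ?_
    rw [Measure.map_apply measurable_snd hE, ← Set.univ_prod,
      hPapp _ (MeasurableSet.univ.prod hE)]
    have hterm : ∀ s t, κ s t * (μ.prod ν) ((Set.univ ×ˢ E) ∩ (atomOf A s ×ˢ atomOf B t))
        = ENNReal.ofReal (w s t) * (ν (atomOf B t))⁻¹ * ν (E ∩ atomOf B t) := by
      intro s t
      rw [Set.prod_inter_prod, Set.univ_inter, Measure.prod_prod]
      exact hκcancel2 s t _ (measure_mono Set.inter_subset_right)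
    calc ∑ s : Finset (Fin n), ∑ t : Finset (Fin n),
          κ s t * (μ.prod ν) ((Set.univ ×ˢ E) ∩ (atomOf A s ×ˢ atomOf B t))
        = ∑ s : Finset (Fin n), ∑ t : Finset (Fin n),
            ENNReal.ofReal (w s t) * (ν (atomOf B t))⁻¹ * ν (E ∩ atomOf B t) :=
          Finset.sum_congr rfl fun s _ => Finset.sum_congr rfl fun t _ => hterm s t
      _ = ∑ t : Finset (Fin n), ∑ s : Finset (Fin n),
            ENNReal.ofReal (w s t) * (ν (atomOf B t))⁻¹ * ν (E ∩ atomOf B t) :=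
          Finset.sum_comm
      _ = ∑ t : Finset (Fin n),
            ENNReal.ofReal (q t) * (ν (atomOf B t))⁻¹ * ν (E ∩ atomOf B t) := by
          refine Finset.sum_congr rfl fun t _ => ?_
          rw [← Finset.sum_mul, ← Finset.sum_mul,
            ← ENNReal.ofReal_sum_of_nonneg (fun s _ => hw0 s t), hwcol t]
      _ = ∑ t : Finset (Fin n), ν (E ∩ atomOf B t) :=
          Finset.sum_congr rfl fun t _ => hfinal2 t _ (measure_mono Set.inter_subset_right)
      _ = ν E := sum_measure_inter_atomOf hB ν hE
  -- probability
  have hPuniv : P Set.univ = 1 := by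
    rw [hPapp _ MeasurableSet.univ]
    have hterm : ∀ s t, κ s t * (μ.prod ν) (Set.univ ∩ (atomOf A s ×ˢ atomOf B t))
        = ENNReal.ofReal (w s t) := by
      intro s t
      rw [Set.univ_inter, Measure.prod_prod, hκcancel s t _ le_rfl, hAcancel s t]
    calc ∑ s : Finset (Fin n), ∑ t : Finset (Fin n),
          κ s t * (μ.prod ν) (Set.univ ∩ (atomOf A s ×ˢ atomOf B t))
        = ∑ s : Finset (Fin n), ∑ t : Finset (Fin n), ENNReal.ofReal (w s t) :=
          Finset.sum_congr rfl fun s _ => Finset.sum_congr rfl fun t _ => hterm s t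
      _ = ∑ s : Finset (Fin n), ENNReal.ofReal (p s) := by
          refine Finset.sum_congr rfl fun s _ => ?_
          rw [← ENNReal.ofReal_sum_of_nonneg (fun t _ => hw0 s t), hwrow s]
      _ = ∑ s : Finset (Fin n), μ (atomOf A s) :=
          Finset.sum_congr rfl fun s _ => by
            rw [hpdef, ENNReal.ofReal_toReal (measure_ne_top μ _)]
      _ = 1 := by
          have h := sum_measure_inter_atomOf hA μ MeasurableSet.univ
          simp only [Set.univ_inter] at h
          rw [h, measure_univ]
  -- mass on H
  have hPH : P H = ∑ s : Finset (Fin n), ∑ t : Finset (Fin n),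
      if good s t then 0 else ENNReal.ofReal (w s t) := by
    rw [hPapp _ hH]
    refine Finset.sum_congr rfl fun s _ => Finset.sum_congr rfl fun t _ => ?_
    by_cases hg : good s t
    · have hempty : H ∩ (atomOf A s ×ˢ atomOf B t) = ∅ := by
        ext ⟨x, y⟩
        simp only [Set.mem_inter_iff, Set.mem_prod, Set.mem_empty_iff_false, iff_false, not_and]
        intro hzH hz1 hz2
        exact (hrect s t x y hz1 hz2).1 hzH hg
      rw [hempty, measure_empty, mul_zero, if_pos hg]
    · have hfull : H ∩ (atomOf A s ×ˢ atomOf B t) = atomOf A s ×ˢ atomOf B t := by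
        ext ⟨x, y⟩
        simp only [Set.mem_inter_iff, Set.mem_prod]
        constructor
        · rintro ⟨_, h⟩; exact h
        · rintro ⟨hz1, hz2⟩
          exact ⟨(hrect s t x y hz1 hz2).2 hg, hz1, hz2⟩
      rw [hfull, Measure.prod_prod, hκcancel s t _ le_rfl, hAcancel s t, if_neg hg]
  have hPHle : (P H).toReal ≤ d := by
    rw [hPH]
    have he : ∀ s t, (if good s t then 0 else ENNReal.ofReal (w s t))
        = ENNReal.ofReal (if good s t then 0 else w s t) := by
      intro s t; split_ifs <;> simp
    have hsum : (∑ s : Finset (Fin n), ∑ t : Finset (Fin n),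
        if good s t then 0 else ENNReal.ofReal (w s t))
        = ENNReal.ofReal (∑ s : Finset (Fin n), ∑ t : Finset (Fin n),
          if good s t then 0 else w s t) := by
      rw [ENNReal.ofReal_sum_of_nonneg (fun s _ => Finset.sum_nonneg fun t _ => by
        split_ifs; exact le_refl 0; exact hw0 s t)]
      refine Finset.sum_congr rfl fun s _ => ?_
      rw [ENNReal.ofReal_sum_of_nonneg (fun t _ => by
        split_ifs; exact le_refl 0; exact hw0 s t)]
      exact Finset.sum_congr rfl fun t _ => he s t
    rw [hsum, ENNReal.toReal_ofReal (Finset.sum_nonneg fun s _ =>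
      Finset.sum_nonneg fun t _ => by split_ifs; exact le_refl 0; exact hw0 s t)]
    exact hwbad
  exact ⟨P, d, ⟨⟨hPuniv⟩, hmarg1, hmarg2⟩, hdual, hPHle⟩

end Construction

-- final assembly
section Final

open scoped ENNReal

variable [MeasurableSpace X] [MeasurableSpace Y]

theorem stmt8' (μ : Measure X) (ν : Measure Y) [IsProbabilityMeasure μ] [IsProbabilityMeasure ν]
    (A : ℕ → Set X) (B : ℕ → Set Y)
    (hA : ∀ n, MeasurableSet (A n)) (hB : ∀ n, MeasurableSet (B n))
    (hnull : μ (Filter.limsup A Filter.atTop) = 0 ∨ ν (Filter.limsup B Filter.atTop) = 0) :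
    alphaInf μ ν (indR (⋃ n, A n ×ˢ B n)) = betaSup μ ν (indR (⋃ n, A n ×ˢ B n)) := by
  classical
  set H : Set (X × Y) := ⋃ n, A n ×ˢ B n with hHdef
  have hH : MeasurableSet H := MeasurableSet.iUnion fun n => (hA n).prod (hB n)
  have hβα : betaSup μ ν (indR H) ≤ alphaInf μ ν (indR H) :=
    csSup_le ⟨0, zero_mem_dual μ ν⟩ fun r hr => le_csInf ⟨_, prod_mem_primal μ ν⟩
      fun r' hr' => weak_duality μ ν hH r hr r' hr'
  refine le_antisymm ?_ hβα
  -- it suffices to show α ≤ β + ε for every ε > 0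
  have key : ∀ ε : ℝ, 0 < ε → alphaInf μ ν (indR H) ≤ betaSup μ ν (indR H) + ε := by
    intro ε hε
    -- obtain an index m such that the tail has small measure
    have hm : ∃ m : ℕ,
        (∀ (P : Measure (X × Y)), IsCoupling μ ν P →
          (P (H \ ⋃ i : Fin m, A i ×ˢ B i)).toReal ≤ ε) := by
      rcases hnull with hA0 | hB0
      · set tail : ℕ → Set X := fun m => ⋃ k, ⋃ (_ : m ≤ k), A k with htaildef
        have htailmeas : ∀ m, MeasurableSet (tail m) :=
          fun m => MeasurableSet.iUnion fun k => MeasurableSet.iUnion fun _ => hA k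
        have hanti : Antitone tail := by
          intro m m' hmm'
          simp only [htaildef]
          exact Set.iUnion₂_subset fun k hk => Set.subset_iUnion₂ (s := fun k _ => A k) k (hmm'.trans hk)
        have hlimsup : Filter.limsup A Filter.atTop = ⋂ m, tail m := by
          rw [Filter.limsup_eq_iInf_iSup_of_nat]
          rfl
        have htend : Filter.Tendsto (μ ∘ tail) Filter.atTop (nhds 0) := by
          have := tendsto_measure_iInter_atTop (μ := μ)
            (fun m => (htailmeas m).nullMeasurableSet) hanti ⟨0, measure_ne_top μ _⟩
          rwa [← hlimsup, hA0] at this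
        obtain ⟨m, hmlt⟩ := (htend.eventually_lt_const
          (by exact ENNReal.ofReal_pos.2 hε : (0 : ℝ≥0∞) < ENNReal.ofReal ε)).exists
        refine ⟨m, fun P hP => ?_⟩
        haveI := hP.1
        have hsub : H \ (⋃ i : Fin m, A i ×ˢ B i) ⊆ tail m ×ˢ Set.univ := by
          rintro ⟨x, y⟩ ⟨hzH, hzH'⟩
          obtain ⟨k, hk⟩ := Set.mem_iUnion.1 hzH
          by_cases hkm : k < m
          · exact absurd (Set.mem_iUnion.2 ⟨⟨k, hkm⟩, hk⟩) hzH'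
          · exact ⟨Set.mem_iUnion₂.2 ⟨k, not_lt.1 hkm, hk.1⟩, trivial⟩
        have h1 : P (H \ ⋃ i : Fin m, A i ×ˢ B i) ≤ μ (tail m) := by
          refine le_trans (measure_mono hsub) ?_
          rw [Set.prod_univ, ← hP.2.1, Measure.map_apply measurable_fst (htailmeas m)]
        calc (P (H \ ⋃ i : Fin m, A i ×ˢ B i)).toReal
            ≤ (ENNReal.ofReal ε).toReal :=
              ENNReal.toReal_mono ENNReal.ofReal_ne_top (h1.trans hmlt.le)
          _ = ε := ENNReal.toReal_ofReal hε.le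
      · set tail : ℕ → Set Y := fun m => ⋃ k, ⋃ (_ : m ≤ k), B k with htaildef
        have htailmeas : ∀ m, MeasurableSet (tail m) :=
          fun m => MeasurableSet.iUnion fun k => MeasurableSet.iUnion fun _ => hB k
        have hanti : Antitone tail := by
          intro m m' hmm'
          simp only [htaildef]
          exact Set.iUnion₂_subset fun k hk => Set.subset_iUnion₂ (s := fun k _ => B k) k (hmm'.trans hk)
        have hlimsup : Filter.limsup B Filter.atTop = ⋂ m, tail m := by
          rw [Filter.limsup_eq_iInf_iSup_of_nat]
          rfl
        have htend : Filter.Tendsto (ν ∘ tail) Filter.atTop (nhds 0) := by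
          have := tendsto_measure_iInter_atTop (μ := ν)
            (fun m => (htailmeas m).nullMeasurableSet) hanti ⟨0, measure_ne_top ν _⟩
          rwa [← hlimsup, hB0] at this
        obtain ⟨m, hmlt⟩ := (htend.eventually_lt_const
          (by exact ENNReal.ofReal_pos.2 hε : (0 : ℝ≥0∞) < ENNReal.ofReal ε)).exists
        refine ⟨m, fun P hP => ?_⟩
        haveI := hP.1
        have hsub : H \ (⋃ i : Fin m, A i ×ˢ B i) ⊆ Set.univ ×ˢ tail m := by
          rintro ⟨x, y⟩ ⟨hzH, hzH'⟩
          obtain ⟨k, hk⟩ := Set.mem_iUnion.1 hzH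
          by_cases hkm : k < m
          · exact absurd (Set.mem_iUnion.2 ⟨⟨k, hkm⟩, hk⟩) hzH'
          · exact ⟨trivial, Set.mem_iUnion₂.2 ⟨k, not_lt.1 hkm, hk.2⟩⟩
        have h1 : P (H \ ⋃ i : Fin m, A i ×ˢ B i) ≤ ν (tail m) := by
          refine le_trans (measure_mono hsub) ?_
          rw [Set.univ_prod, ← hP.2.2, Measure.map_apply measurable_snd (htailmeas m)]
        calc (P (H \ ⋃ i : Fin m, A i ×ˢ B i)).toReal
            ≤ (ENNReal.ofReal ε).toReal :=
              ENNReal.toReal_mono ENNReal.ofReal_ne_top (h1.trans hmlt.le)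
          _ = ε := ENNReal.toReal_ofReal hε.le
    obtain ⟨m, hmP⟩ := hm
    obtain ⟨P, r, hP, hrdual, hPle⟩ := finite_union_lemma μ ν (fun i : Fin m => A i)
      (fun i : Fin m => B i) (fun i => hA i) (fun i => hB i)
    haveI := hP.1
    set H' : Set (X × Y) := ⋃ i : Fin m, A i ×ˢ B i with hH'def
    have hH' : MeasurableSet H' := MeasurableSet.iUnion fun i => (hA i).prod (hB i)
    have hH'sub : H' ⊆ H := Set.iUnion_subset fun i => Set.subset_iUnion_of_subset i.1 le_rfl
    -- r belongs to the dual set of the full H as well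
    have hrdual' : r ∈ dualLowerSet μ ν (indR H) := by
      obtain ⟨f, g, hf, hg, hle, hr⟩ := hrdual
      refine ⟨f, g, hf, hg, fun x y => (hle x y).trans ?_, hr⟩
      exact Set.indicator_le_indicator_of_subset hH'sub (fun _ => zero_le_one) _
    have hrβ : r ≤ betaSup μ ν (indR H) := le_csSup (dual_bddAbove μ ν hH) hrdual'
    -- α ≤ ∫ indR H dP = (P H).toReal
    have hα : alphaInf μ ν (indR H) ≤ (P H).toReal := by
      have hmem : ((P H).toReal : ℝ) ∈ primalSet μ ν (indR H) := by
        refine ⟨P, hP, ?_⟩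
        rw [hHdef]
        rw [show indR (⋃ n, A n ×ˢ B n) = (⋃ n, A n ×ˢ B n).indicator (fun _ => (1:ℝ)) from rfl]
        rw [integral_indicator_const (1 : ℝ) hH]
        simp [measureReal_def]
        rfl
      exact csInf_le (primal_bddBelow μ ν) hmem
    have hsplit : (P H).toReal ≤ (P H').toReal + ε := by
      have h1 : P H ≤ P H' + P (H \ H') := by
        calc P H = P (H' ∪ (H \ H')) := by rw [Set.union_diff_cancel hH'sub]
          _ ≤ P H' + P (H \ H') := measure_union_le _ _
      have h2 : (P H).toReal ≤ (P H' + P (H \ H')).toReal :=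
        ENNReal.toReal_mono (ENNReal.add_ne_top.2 ⟨measure_ne_top P _, measure_ne_top P _⟩) h1
      rw [ENNReal.toReal_add (measure_ne_top P _) (measure_ne_top P _)] at h2
      have h3 := hmP P hP
      linarith [h3]
    calc alphaInf μ ν (indR H) ≤ (P H).toReal := hα
      _ ≤ (P H').toReal + ε := hsplit
      _ ≤ r + ε := by linarith [hPle]
      _ ≤ betaSup μ ν (indR H) + ε := by linarith [hrβ]
  by_contra hlt
  push_neg at hlt
  have h2 := key ((alphaInf μ ν (indR H) - betaSup μ ν (indR H)) / 2) (by linarith)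
  linarith

end Final

theorem stmt8 [MeasurableSpace X] [MeasurableSpace Y]
    (μ : Measure X) (ν : Measure Y) [IsProbabilityMeasure μ] [IsProbabilityMeasure ν]
    (A : ℕ → Set X) (B : ℕ → Set Y)
    (hA : ∀ n, MeasurableSet (A n)) (hB : ∀ n, MeasurableSet (B n))
    (hnull : μ (Filter.limsup A Filter.atTop) = 0 ∨ ν (Filter.limsup B Filter.atTop) = 0) :
    alphaInf μ ν (indR (⋃ n, A n ×ˢ B n)) = betaSup μ ν (indR (⋃ n, A n ×ˢ B n)) := by
  exact stmt8' μ ν A B hA hB hnull
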